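/- Let X be a finite connected cubic graph on 2n vertices with n odd, whose full automorphism group acts simply transitively on the 2-arcs of X and contains a subgroup acting simply transitively on the arcs of X (i.e., X is of type {1,2^1}). Then X has an odd automorphism. -/
import Mathlib


open SimpleGraph

/-- `g` is an automorphism of the graph `G`. -/
def IsAut {V : Type*} (G : SimpleGraph V) (g : Equiv.Perm V) : Prop :=
  ∀ u v : V, G.Adj (g u) (g v) ↔ G.Adj u v

/-- `a` is an `s`-arc of `G`: a sequence of `s+1` pairwise distinct vertices
with consecutive vertices adjacent. -/
def IsSArc {V : Type*} (G : SimpleGraph V) (s : ℕ) (a : Fin (s + 1) → V) : Prop :=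
  Function.Injective a ∧ ∀ i : Fin s, G.Adj (a i.castSucc) (a i.succ)

/-- The full automorphism group of `G` acts simply transitively on `s`-arcs. -/
def AutSimplyTransitive {V : Type*} (G : SimpleGraph V) (s : ℕ) : Prop :=
  ∀ a b : Fin (s + 1) → V, IsSArc G s a → IsSArc G s b →
    ∃! g : Equiv.Perm V, IsAut G g ∧ ∀ i : Fin (s + 1), g (a i) = b i

/-- The subgroup `H` of permutations acts simply transitively on `s`-arcs of `G`. -/
def SubgroupSimplyTransitive {V : Type*} (G : SimpleGraph V)
    (H : Subgroup (Equiv.Perm V)) (s : ℕ) : Prop :=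
  ∀ a b : Fin (s + 1) → V, IsSArc G s a → IsSArc G s b →
    ∃! g : H, ∀ i : Fin (s + 1), (g : Equiv.Perm V) (a i) = b i

/-- The full automorphism group of `G` acts transitively on arcs. -/
def AutArcTransitive {V : Type*} (G : SimpleGraph V) : Prop :=
  ∀ a b : Fin 2 → V, IsSArc G 1 a → IsSArc G 1 b →
    ∃ g : Equiv.Perm V, IsAut G g ∧ ∀ i : Fin 2, g (a i) = b i

/-- `G` is cubic: every vertex has exactly three neighbours. -/
def IsCubic {V : Type*} (G : SimpleGraph V) : Prop :=
  ∀ v : V, (G.neighborSet v).ncard = 3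

/-- `G` is bipartite: the vertex set splits into two parts so that every
edge joins the two parts. -/
def IsBipartite {V : Type*} (G : SimpleGraph V) : Prop :=
  ∃ s : Set V, ∀ u v : V, G.Adj u v → ((u ∈ s ∧ v ∉ s) ∨ (u ∉ s ∧ v ∈ s))

/-- `g` is an automorphism of order 2 interchanging two adjacent vertices. -/
def FlipInvolution {V : Type*} (G : SimpleGraph V) (g : Equiv.Perm V) : Prop :=
  IsAut G g ∧ orderOf g = 2 ∧ ∃ u v : V, G.Adj u v ∧ g u = v ∧ g v = u

/-- The complete graph on two vertices (a single edge). -/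
def K2 : SimpleGraph (Fin 2) := ⊤

/-- The star `K_{1,3}`: centre `0` adjacent to the three leaves `1`, `2`, `3`. -/
def Star3 : SimpleGraph (Fin 4) := SimpleGraph.fromRel (fun i _ => i = 0)

/-- The `H`-tree: two adjacent central vertices `0`, `1`, each adjacent to two
further leaves. -/
def Htree : SimpleGraph (Fin 6) := SimpleGraph.fromRel (fun i j =>
  (i = 0 ∧ (j = 1 ∨ j = 2 ∨ j = 3)) ∨ (i = 1 ∧ (j = 4 ∨ j = 5)))

/-- The `A`-tree: a root `0` of degree three whose three neighbours `1`, `2`, `3`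
are each adjacent to two further leaves. -/
def Atree : SimpleGraph (Fin 10) := SimpleGraph.fromRel (fun i j =>
  (i = 0 ∧ (j = 1 ∨ j = 2 ∨ j = 3)) ∨ (i = 1 ∧ (j = 4 ∨ j = 5)) ∨
  (i = 2 ∧ (j = 6 ∨ j = 7)) ∨ (i = 3 ∧ (j = 8 ∨ j = 9)))

/-- The subgraph of `G` induced on the set of vertices fixed by `α`. -/
def FixSubgraph {V : Type*} (G : SimpleGraph V) (α : Equiv.Perm V) :
    SimpleGraph ({v : V | α v = v} : Set V) :=
  G.induce {v : V | α v = v}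

/-- The connected component `c` of the subgraph of `G` induced on the fixed
points of `α` is isomorphic to the pattern graph `P`. -/
def ComponentIso {V W : Type*} (G : SimpleGraph V) (α : Equiv.Perm V)
    (c : (FixSubgraph G α).ConnectedComponent) (P : SimpleGraph W) : Prop :=
  Nonempty ((FixSubgraph G α).induce c.supp ≃g P)

/-- a connected cubic graph on `2n` vertices with `n` odd, whose
full automorphism group is 2-regular and admits a 1-regular subgroup (type
`{1,2^1}`), has an odd automorphism. -/
lemma isSArc_pair {V : Type*} (G : SimpleGraph V) {u v : V} (h : G.Adj u v) :
    IsSArc G 1 ![u, v] := by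
  have hne := h.ne
  constructor
  · intro i j hij
    fin_cases i <;> fin_cases j <;> simp_all
  · intro i
    fin_cases i
    simpa using h


theorem stmt19 {V : Type*} [Fintype V] [DecidableEq V] (G : SimpleGraph V) (n : ℕ)
    (hcard : Fintype.card V = 2 * n) (hn : Odd n)
    (hconn : G.Connected) (hcubic : IsCubic G)
    (hreg : AutSimplyTransitive G 2)
    (hsub : ∃ H : Subgroup (Equiv.Perm V),
      (∀ g ∈ H, IsAut G g) ∧ SubgroupSimplyTransitive G H 1) :
    ∃ g : Equiv.Perm V, IsAut G g ∧ Equiv.Perm.sign g = -1 := by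
  obtain ⟨H, hHaut, hHreg⟩ := hsub
  -- V is nonempty
  have hn0 : n ≠ 0 := hn.pos.ne'
  have hVpos : 0 < Fintype.card V := by omega
  have : Nonempty V := Fintype.card_pos_iff.mp hVpos
  obtain ⟨v⟩ := this
  -- find a neighbor u of v
  have hne : (G.neighborSet v).Nonempty := by
    rw [← Set.ncard_pos (Set.toFinite _)]; rw [hcubic v]; omega
  obtain ⟨u, hu⟩ := hne
  have hadj : G.Adj v u := hu
  -- the flip element g
  obtain ⟨g, hg, hguniq⟩ := hHreg ![v, u] ![u, v] (isSArc_pair G hadj) (isSArc_pair G hadj.symm)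
  have hgv : (g : Equiv.Perm V) v = u := by simpa using hg 0
  have hgu : (g : Equiv.Perm V) u = v := by simpa using hg 1
  -- uniqueness of element fixing an arc: it is 1
  have fix_arc : ∀ (k : H) (a b : V), G.Adj a b → (k : Equiv.Perm V) a = a →
      (k : Equiv.Perm V) b = b → k = 1 := by
    intro k a b hab hka hkb
    obtain ⟨m, hm, hmuniq⟩ := hHreg ![a, b] ![a, b] (isSArc_pair G hab) (isSArc_pair G hab)
    have h1 : k = m := hmuniq k (by intro i; fin_cases i <;> simpa [hka, hkb])
    have h2 : (1 : H) = m := hmuniq 1 (by intro i; fin_cases i <;> simp)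
    rw [h1, ← h2]
  -- g² = 1
  have hg2 : g * g = 1 := by
    apply fix_arc _ v u hadj
    · simp [hgv, hgu]
    · simp [hgv, hgu]
  have hg1 : g ≠ 1 := by
    intro h
    rw [h] at hgv
    exact hadj.ne (by simpa using hgv)
  -- g has no fixed points
  have hgfix : ∀ w : V, (g : Equiv.Perm V) w ≠ w := by
    intro w hw
    -- neighbors of w
    obtain ⟨a, b, c, hab, hac, hbc, hS⟩ := Set.ncard_eq_three.mp (hcubic w)
    have haut : IsAut G (g : Equiv.Perm V) := hHaut g g.2
    have hmem : ∀ x, x ∈ G.neighborSet w → (g : Equiv.Perm V) x ∈ G.neighborSet w := by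
      intro x hx
      have : G.Adj ((g : Equiv.Perm V) w) ((g : Equiv.Perm V) x) := (haut w x).mpr hx
      rwa [hw] at this
    have hinv : ∀ x : V, (g : Equiv.Perm V) ((g : Equiv.Perm V) x) = x := by
      intro x
      have := congrArg (fun k : H => (k : Equiv.Perm V) x) hg2
      simpa using this
    -- some neighbor is fixed
    have hfix : ∃ x ∈ G.neighborSet w, (g : Equiv.Perm V) x = x := by
      by_contra hcon
      push_neg at hcon
      set f := (g : Equiv.Perm V)
      have ha' : a ∈ G.neighborSet w := by rw [hS]; simp
      have hb' : b ∈ G.neighborSet w := by rw [hS]; simp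
      have hc' : c ∈ G.neighborSet w := by rw [hS]; simp
      have hga := hmem a ha'; have hgb := hmem b hb'; have hgc := hmem c hc'
      rw [hS] at hga hgb hgc
      simp only [Set.mem_insert_iff, Set.mem_singleton_iff] at hga hgb hgc
      have hna := hcon a ha'; have hnb := hcon b hb'; have hnc := hcon c hc'
      have hinj := f.injective
      rcases hga with h1 | h1 | h1
      · exact hna h1
      · -- f a = b, so f b = a, and f c has nowhere to go
        have hfb : f b = a := by rw [← h1, hinv]
        rcases hgc with h2 | h2 | h2
        · exact hbc (hinj (hfb.trans h2.symm))
        · exact hac (hinj (h1.trans h2.symm))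
        · exact hnc h2
      · -- f a = c, so f c = a, and f b has nowhere to go
        have hfc : f c = a := by rw [← h1, hinv]
        rcases hgb with h2 | h2 | h2
        · exact hbc (hinj (h2.trans hfc.symm))
        · exact hnb h2
        · exact hab (hinj (h1.trans h2.symm))
    obtain ⟨x, hx, hfx⟩ := hfix
    exact hg1 (fix_arc g w x hx hw hfx)
  -- now compute the sign
  set f := (g : Equiv.Perm V) with hf
  have hf2 : f ^ 2 = 1 := by
    have := congrArg (Subtype.val) hg2
    simpa [sq] using this
  have hford : orderOf f = 2 := by
    haveI : Fact (Nat.Prime 2) := ⟨Nat.prime_two⟩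
    exact orderOf_eq_prime hf2 (fun h => hg1 (Subtype.ext h))
  obtain ⟨m, hm⟩ := Equiv.Perm.cycleType_prime_order (by rw [hford]; exact Nat.prime_two)
  rw [hford] at hm
  have hsupp : f.support = Finset.univ := by
    ext w; simp [Equiv.Perm.mem_support, hgfix w]
  have hsum : f.cycleType.sum = 2 * n := by
    rw [Equiv.Perm.sum_cycleType, hsupp, Finset.card_univ, hcard]
  rw [hm] at hsum
  simp [Multiset.sum_replicate, smul_eq_mul] at hsum
  have hmn : m + 1 = n := by omega
  refine ⟨f, hHaut g g.2, ?_⟩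
  rw [Equiv.Perm.sign_of_cycleType, hm]
  simp [Multiset.sum_replicate, smul_eq_mul, hmn]
  rw [show n * 2 + n = 3 * n by omega]
  refine Odd.neg_one_pow ?_
  rw [Nat.odd_mul]
  exact ⟨⟨1, by norm_num⟩, hn⟩
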